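/- Let q₁ = [A₁,B₁,C₁] and q₂ = [A₂,B₂,C₂] be PIBQFs with discriminants D₁, D₂, let x = B_Δ(q₁,q₂), and let q₃ := [A₂B₁ − A₁B₂, 2A₂C₁ − 2A₁C₂, B₂C₁ − B₁C₂]. Then the discriminant of q₃ equals x² − D₁D₂; moreover, if x² < D₁D₂, then q₃ is a (negative-discriminant) form whose unique complex root z with Im z > 0 of q₃(z,1) = 0 is the unique point of the upper half-plane lying on both root geodesics ℓ_{q₁} and ℓ_{q₂}. -/

import Mathlib

/-- A binary quadratic form `[A,B,C]`, encoded as a triple of integers. -/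
abbrev BQF := ℤ × ℤ × ℤ

/-- The discriminant `B² - 4AC` of a binary quadratic form `[A,B,C]`. -/
def disc (q : BQF) : ℤ := q.2.1 ^ 2 - 4 * q.1 * q.2.2

/-- A binary quadratic form is primitive if `gcd(A,B,C) = 1`. -/
def IsPrimitiveBQF (q : BQF) : Prop := Int.gcd q.1 (Int.gcd q.2.1 q.2.2) = 1

/-- A primitive indefinite binary quadratic form: primitive, of positive
nonsquare discriminant. -/
def IsPIBQF (q : BQF) : Prop := IsPrimitiveBQF q ∧ 0 < disc q ∧ ¬ IsSquare (disc q)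

abbrev SL2Z := Matrix.SpecialLinearGroup (Fin 2) ℤ

/-- The action of `SL(2,ℤ)` on binary quadratic forms:
`(γ ∘ q)(x,y) = q(ax + by, cx + dy)`. -/
def actForm (γ : SL2Z) (q : BQF) : BQF :=
  ((q.1 * (γ.1 0 0)^2 + q.2.1 * (γ.1 0 0) * (γ.1 1 0) + q.2.2 * (γ.1 1 0)^2),
   (2 * q.1 * (γ.1 0 0) * (γ.1 0 1) + q.2.1 * ((γ.1 0 0) * (γ.1 1 1) + (γ.1 0 1) * (γ.1 1 0))
      + 2 * q.2.2 * (γ.1 1 0) * (γ.1 1 1)),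
   (q.1 * (γ.1 0 1)^2 + q.2.1 * (γ.1 0 1) * (γ.1 1 1) + q.2.2 * (γ.1 1 1)^2))

/-- Equivalence of binary quadratic forms under `SL(2,ℤ)`. -/
def equivF (q q' : BQF) : Prop := ∃ γ : SL2Z, actForm γ q = q'

/-- `B_Δ(q₁,q₂) = B₁B₂ - 2A₁C₂ - 2A₂C₁`. -/
def BΔ (q₁ q₂ : BQF) : ℤ := q₁.2.1 * q₂.2.1 - 2 * q₁.1 * q₂.2.2 - 2 * q₂.1 * q₁.2.2

/-- A fundamental discriminant. -/
def IsFundamentalDisc (D : ℤ) : Prop :=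
  (D % 4 = 1 ∧ Squarefree D) ∨
    (∃ m : ℤ, D = 4 * m ∧ Squarefree m ∧ (m % 4 = 2 ∨ m % 4 = 3))

/-- The Kronecker symbol `(a / p)` for a prime `p`. -/
def kron (a : ℤ) (p : ℕ) : ℤ :=
  if p = 2 then (if a % 2 = 0 then 0 else if a % 8 = 1 ∨ a % 8 = 7 then 1 else -1)
  else jacobiSym a p

/-- `ε(p)`: the nonzero value among the Kronecker symbols `(D₁/p)`, `(D₂/p)`. -/
def epsP (D₁ D₂ : ℤ) (p : ℕ) : ℤ := if kron D₁ p = 0 then kron D₂ p else kron D₁ p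

/-- The multiplicative extension of `ε` to positive integers. -/
def epsMul (D₁ D₂ : ℤ) (d : ℕ) : ℤ :=
  d.factorization.prod fun p k => (epsP D₁ D₂ p) ^ k

/-- Pairs of primitive forms of discriminants `D₁, D₂` with `B_Δ = n`. -/
def PairSet (D₁ D₂ n : ℤ) : Type :=
  {p : BQF × BQF // IsPrimitiveBQF p.1 ∧ IsPrimitiveBQF p.2 ∧
    disc p.1 = D₁ ∧ disc p.2 = D₂ ∧ BΔ p.1 p.2 = n}

/-- Simultaneous `SL(2,ℤ)`-equivalence of pairs. -/
def pairRel (D₁ D₂ n : ℤ) (x y : PairSet D₁ D₂ n) : Prop :=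
  ∃ γ : SL2Z, actForm γ x.1.1 = y.1.1 ∧ actForm γ x.1.2 = y.1.2

/-- `p(n)`: the number of simultaneous equivalence classes of pairs of primitive
forms of discriminants `D₁, D₂` with `B_Δ = n`. -/
noncomputable def pCount (D₁ D₂ n : ℤ) : ℕ := Nat.card (Quot (pairRel D₁ D₂ n))

/-- The root geodesic of an indefinite form, as a subset of the upper half plane. -/
def rootGeodesic (q : BQF) : Set ℂ :=
  {z : ℂ | 0 < z.im ∧
    (q.1 : ℝ) * Complex.normSq z + (q.2.1 : ℝ) * z.re + (q.2.2 : ℝ) = 0}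

/-- The first root `(-B + √D)/(2A)` of a PIBQF. -/
noncomputable def firstRoot (q : BQF) : ℝ :=
  (-(q.2.1 : ℝ) + Real.sqrt (disc q)) / (2 * q.1)

/-- The second root `(-B - √D)/(2A)` of a PIBQF. -/

lemma geodesic_aux (a b c A₁ B₁ C₁ A₂ B₂ C₂ : ℝ)
    (hA : a = A₂ * B₁ - A₁ * B₂) (hB : b = 2 * A₂ * C₁ - 2 * A₁ * C₂)
    (hC : c = B₂ * C₁ - B₁ * C₂) (hd : b ^ 2 - 4 * a * c < 0) :
    ∃ z : ℂ, 0 < z.im ∧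
      (∀ w : ℂ, (0 < w.im ∧ (a : ℂ) * w ^ 2 + (b : ℂ) * w + (c : ℂ) = 0) ↔ w = z) ∧
      (∀ w : ℂ, ((0 < w.im ∧ A₁ * Complex.normSq w + B₁ * w.re + C₁ = 0) ∧
                 (0 < w.im ∧ A₂ * Complex.normSq w + B₂ * w.re + C₂ = 0)) ↔ w = z) := by
  have ha : a ≠ 0 := by
    intro h
    rw [h] at hd
    nlinarith [sq_nonneg b]
  have h2a : (2 * a) ≠ 0 := mul_ne_zero two_ne_zero ha
  have ht : 0 < 4 * a * c - b ^ 2 := by linarith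
  obtain ⟨im, him_def⟩ : ∃ t : ℝ, t = Real.sqrt (4 * a * c - b ^ 2) / (2 * |a|) := ⟨_, rfl⟩
  have him : 0 < im := him_def ▸ div_pos (Real.sqrt_pos.mpr ht) (by positivity)
  have him2 : im ^ 2 = (4 * a * c - b ^ 2) / (4 * a ^ 2) := by
    rw [him_def, div_pow, Real.sq_sqrt ht.le, mul_pow, sq_abs]
    norm_num
  obtain ⟨re, hre_def⟩ : ∃ t : ℝ, t = -b / (2 * a) := ⟨_, rfl⟩
  have h1 : 2 * a * re = -b := by
    rw [hre_def]; field_simp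
  have h2 : a * (re ^ 2 + im ^ 2) = c := by
    rw [hre_def, him2]; field_simp; ring
  refine ⟨⟨re, im⟩, him, ?_, ?_⟩
  · intro w
    constructor
    · rintro ⟨hw, heq⟩
      rw [Complex.ext_iff] at heq
      obtain ⟨e1, e2⟩ := heq
      simp [pow_two, Complex.mul_re, Complex.mul_im] at e1 e2
      have hv : w.im ≠ 0 := ne_of_gt hw
      have hr0 : (2 * a * w.re + b) * w.im = 0 := by linear_combination e2
      have hr : 2 * a * w.re + b = 0 := by
        rcases mul_eq_zero.mp hr0 with h | h
        · exact h
        · exact absurd h hv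
      have hre : w.re = re := by
        apply mul_left_cancel₀ h2a
        linarith [h1]
      have hv2 : w.im ^ 2 = im ^ 2 := by
        rw [hre] at e1
        have key : a * (im ^ 2 - w.im ^ 2) = 0 := by
          linear_combination e1 + h2 - re * h1
        rcases mul_eq_zero.mp key with h | h
        · exact absurd h ha
        · linarith
      have hvim : w.im = im := by
        have : (w.im - im) * (w.im + im) = 0 := by linear_combination hv2
        rcases mul_eq_zero.mp this with h | h
        · linarith
        · linarith
      exact Complex.ext hre hvim
    · rintro rfl
      refine ⟨him, ?_⟩
      rw [Complex.ext_iff]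
      constructor
      · simp [pow_two, Complex.mul_re, Complex.mul_im]
        linear_combination re * h1 - h2
      · simp [pow_two, Complex.mul_re, Complex.mul_im]
        linear_combination im * h1
  · intro w
    constructor
    · rintro ⟨⟨hw, e1⟩, ⟨_, e2⟩⟩
      rw [Complex.normSq_apply] at e1 e2
      have hr : 2 * a * w.re + b = 0 := by
        linear_combination 2 * A₂ * e1 - 2 * A₁ * e2 + 2 * w.re * hA + hB
      have hre : w.re = re := by
        apply mul_left_cancel₀ h2a
        linarith [h1]
      have hn : a * (w.re * w.re + w.im * w.im) = c := by
        linear_combination B₁ * e2 - B₂ * e1 + (w.re * w.re + w.im * w.im) * hA - hC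
      have hv2 : w.im ^ 2 = im ^ 2 := by
        rw [hre] at hn
        have key : a * (im ^ 2 - w.im ^ 2) = 0 := by
          linear_combination h2 - hn
        rcases mul_eq_zero.mp key with h | h
        · exact absurd h ha
        · linarith
      have hvim : w.im = im := by
        have : (w.im - im) * (w.im + im) = 0 := by linear_combination hv2
        rcases mul_eq_zero.mp this with h | h
        · linarith
        · linarith
      exact Complex.ext hre hvim
    · rintro rfl
      have key1 : 2 * a * (A₁ * (re * re + im * im) + B₁ * re + C₁) = 0 := by
        linear_combination 2 * A₁ * h2 + B₁ * h1 + 2 * C₁ * hA - B₁ * hB + 2 * A₁ * hC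
      have key2 : 2 * a * (A₂ * (re * re + im * im) + B₂ * re + C₂) = 0 := by
        linear_combination 2 * A₂ * h2 + B₂ * h1 + 2 * C₂ * hA - B₂ * hB + 2 * A₂ * hC
      refine ⟨⟨him, ?_⟩, ⟨him, ?_⟩⟩
      · show A₁ * Complex.normSq ⟨re, im⟩ + B₁ * re + C₁ = 0
        rw [Complex.normSq_mk]
        exact (mul_eq_zero.mp key1).resolve_left h2a
      · show A₂ * Complex.normSq ⟨re, im⟩ + B₂ * re + C₂ = 0
        rw [Complex.normSq_mk]
        exact (mul_eq_zero.mp key2).resolve_left h2a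

noncomputable def secondRoot (q : BQF) : ℝ :=
  (-(q.2.1 : ℝ) - Real.sqrt (disc q)) / (2 * q.1)


/-- Proposition 5(ii)(b) of the paper.
The form `q₃ = [A₂B₁ - A₁B₂, 2A₂C₁ - 2A₁C₂, B₂C₁ - B₁C₂]` has discriminant
`x² - D₁D₂` where `x = B_Δ(q₁,q₂)`; if `x² < D₁D₂`, its unique upper half plane
root is the unique intersection point of the root geodesics of `q₁, q₂`. -/
theorem intersection_point_is_root_of_q₃
    (q₁ q₂ q₃ : BQF) (h₁ : IsPIBQF q₁) (h₂ : IsPIBQF q₂)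
    (hq₃ : q₃ = (q₂.1 * q₁.2.1 - q₁.1 * q₂.2.1,
                 2 * q₂.1 * q₁.2.2 - 2 * q₁.1 * q₂.2.2,
                 q₂.2.1 * q₁.2.2 - q₁.2.1 * q₂.2.2)) :
    disc q₃ = (BΔ q₁ q₂) ^ 2 - disc q₁ * disc q₂ ∧
    ((BΔ q₁ q₂) ^ 2 < disc q₁ * disc q₂ →
      ∃ z : ℂ, 0 < z.im ∧
        (∀ w : ℂ, (0 < w.im ∧
            (q₃.1 : ℂ) * w ^ 2 + (q₃.2.1 : ℂ) * w + (q₃.2.2 : ℂ) = 0) ↔ w = z) ∧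
        (∀ w : ℂ, (w ∈ rootGeodesic q₁ ∧ w ∈ rootGeodesic q₂) ↔ w = z)) := by
  obtain ⟨A₁, B₁, C₁⟩ := q₁
  obtain ⟨A₂, B₂, C₂⟩ := q₂
  subst hq₃
  dsimp only at *
  constructor
  · simp only [disc, BΔ]; ring
  · intro hlt
    simp only [disc, BΔ] at hlt
    have hdZ : (2 * A₂ * C₁ - 2 * A₁ * C₂) ^ 2
        - 4 * (A₂ * B₁ - A₁ * B₂) * (B₂ * C₁ - B₁ * C₂) < 0 := by
      have h : (2 * A₂ * C₁ - 2 * A₁ * C₂) ^ 2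
          - 4 * (A₂ * B₁ - A₁ * B₂) * (B₂ * C₁ - B₁ * C₂)
          = (B₁ * B₂ - 2 * A₁ * C₂ - 2 * A₂ * C₁) ^ 2
            - (B₁ ^ 2 - 4 * A₁ * C₁) * (B₂ ^ 2 - 4 * A₂ * C₂) := by ring
      omega
    have hdR : ((2 * A₂ * C₁ - 2 * A₁ * C₂ : ℤ) : ℝ) ^ 2
        - 4 * ((A₂ * B₁ - A₁ * B₂ : ℤ) : ℝ) * ((B₂ * C₁ - B₁ * C₂ : ℤ) : ℝ) < 0 := by
      exact_mod_cast hdZ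
    obtain ⟨z, hz, hq, hg⟩ := geodesic_aux
      ((A₂ * B₁ - A₁ * B₂ : ℤ) : ℝ) ((2 * A₂ * C₁ - 2 * A₁ * C₂ : ℤ) : ℝ)
      ((B₂ * C₁ - B₁ * C₂ : ℤ) : ℝ) (A₁ : ℝ) (B₁ : ℝ) (C₁ : ℝ) (A₂ : ℝ) (B₂ : ℝ) (C₂ : ℝ)
      (by push_cast; ring) (by push_cast; ring) (by push_cast; ring) hdR
    refine ⟨z, hz, ?_, ?_⟩
    · intro w
      have h := hq w
      push_cast at h ⊢
      exact h
    · intro w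
      have h := hg w
      simp only [rootGeodesic, Set.mem_setOf_eq]
      exact h
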